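/- arXiv:1710.04614 — 9 statements merged into one kernel-verified Lean document; each statement's English description precedes it below -/
import Mathlib

section
/- mono commutes with radicals: mono(√I) = √(mono(I)) for any ideal I ⊆ R. -/
open MvPolynomial

/-- A (monic) monomial in a polynomial ring. -/
def IsMonomial {k : Type*} [Field k] {n : ℕ} (f : MvPolynomial (Fin n) k) : Prop :=
  ∃ s : Fin n →₀ ℕ, f = MvPolynomial.monomial s 1

/-- `mono I` is the largest monomial subideal of `I`: the ideal generated by all
monomials contained in `I`. -/
noncomputable def mono {k : Type*} [Field k] {n : ℕ} (I : Ideal (MvPolynomial (Fin n) k)) :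
    Ideal (MvPolynomial (Fin n) k) :=
  Ideal.span {f | IsMonomial f ∧ f ∈ I}

/-- A monomial ideal is one generated by its monomials. -/
def IsMonomialIdeal {k : Type*} [Field k] {n : ℕ} (I : Ideal (MvPolynomial (Fin n) k)) : Prop :=
  mono I = I

/-- The homogeneous maximal ideal `(x₁, …, xₙ)`. -/
noncomputable def maxIdeal (k : Type*) [Field k] (n : ℕ) : Ideal (MvPolynomial (Fin n) k) :=
  Ideal.span (Set.range MvPolynomial.X)

/-- A graded (homogeneous) ideal. -/
def IsHomogeneousIdeal {k : Type*} [Field k] {n : ℕ}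
    (I : Ideal (MvPolynomial (Fin n) k)) : Prop :=
  ∀ f ∈ I, ∀ i : ℕ, MvPolynomial.homogeneousComponent i f ∈ I

section aux

/-- Index type for the fine (multi-)grading: `Fin n →₀ ℕ` with lexicographic order. -/
def MIdx (n : ℕ) : Type := Lex (Fin n →₀ ℕ)

noncomputable instance {n : ℕ} : AddCommMonoid (MIdx n) :=
  inferInstanceAs (AddCommMonoid (Lex (Fin n →₀ ℕ)))

noncomputable instance {n : ℕ} : LinearOrder (MIdx n) :=
  inferInstanceAs (LinearOrder (Lex (Fin n →₀ ℕ)))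

instance {n : ℕ} : IsOrderedCancelAddMonoid (MIdx n) :=
  inferInstanceAs (IsOrderedCancelAddMonoid (Lex (Fin n →₀ ℕ)))

/-- The canonical identification. -/
def toM {n : ℕ} (d : Fin n →₀ ℕ) : MIdx n := toLex d

lemma toM_injective {n : ℕ} : Function.Injective (toM (n := n)) :=
  fun _ _ h => toLex.injective h

/-- Inverse identification. -/
def ofM {n : ℕ} (m : MIdx n) : Fin n →₀ ℕ := ofLex m

lemma toM_ofM {n : ℕ} (m : MIdx n) : toM (ofM m) = m := rfl

variable {k : Type*} [Field k] {n : ℕ}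

/-- The weight function giving the fine (multi-)grading on `MvPolynomial (Fin n) k`. -/
noncomputable def mw (n : ℕ) : Fin n → MIdx n := fun i => toM (Finsupp.single i 1)

lemma weight_mw (d : Fin n →₀ ℕ) : Finsupp.weight (mw n) d = toM d := by
  rw [Finsupp.weight_apply]
  show d.sum (fun i c => c • toM (Finsupp.single i 1)) = toM d
  have : d.sum (fun i c => c • (Finsupp.single i 1 : Fin n →₀ ℕ)) = d := by
    conv_rhs => rw [← d.sum_single]
    exact Finsupp.sum_congr fun i _ => by rw [Finsupp.smul_single, smul_eq_mul, mul_one]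
  exact this

lemma eq_monomial_of_weighted_homogeneous {g : MvPolynomial (Fin n) k} {d : Fin n →₀ ℕ}
    (h : g.IsWeightedHomogeneous (mw n) (toM d)) :
    g = MvPolynomial.monomial d (MvPolynomial.coeff d g) := by
  ext d'
  rw [coeff_monomial]
  split_ifs with hd
  · rw [hd]
  · exact h.coeff_eq_zero d' (by rw [weight_mw]; exact fun hc => hd (toM_injective hc).symm)

/-- The fine grading on `MvPolynomial (Fin n) k`, as a graded algebra. -/
noncomputable instance : GradedAlgebra (weightedHomogeneousSubmodule k (mw n)) :=
  weightedGradedAlgebra k (mw n)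

/-- Monomials in `√I` lie in `√(mono I)`. -/
lemma easy_dir (I : Ideal (MvPolynomial (Fin n) k)) :
    mono I.radical ≤ (mono I).radical := by
  rw [mono, Ideal.span_le]
  rintro f ⟨⟨s, rfl⟩, hf⟩
  obtain ⟨m, hm⟩ := hf
  refine ⟨m, Ideal.subset_span ⟨⟨m • s, ?_⟩, hm⟩⟩
  rw [monomial_pow, one_pow]

end aux

theorem mono_radical {k : Type*} [Field k] {n : ℕ}
    (I : Ideal (MvPolynomial (Fin n) k)) :
    mono I.radical = (mono I).radical := by
  refine le_antisymm (easy_dir I) ?_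
  -- `mono I` is homogeneous for the fine grading:
  have hhom : (mono I).IsHomogeneous (weightedHomogeneousSubmodule k (mw n)) := by
    apply Ideal.homogeneous_span
    rintro f ⟨⟨s, rfl⟩, -⟩
    exact ⟨toM s, isWeightedHomogeneous_monomial _ _ _ (weight_mw s)⟩
  have hrad := hhom.radical
  -- hence every element of `√(mono I)` is a sum of its (monomial) components
  intro f hf
  classical
  rw [← DirectSum.sum_support_decompose (weightedHomogeneousSubmodule k (mw n)) f]
  apply Ideal.sum_mem
  intro i _
  set g : MvPolynomial (Fin n) k :=
    (DirectSum.decompose (weightedHomogeneousSubmodule k (mw n)) f i : MvPolynomial (Fin n) k)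
    with hg
  have hgrad : g ∈ (mono I).radical := hrad i hf
  have hghom : g.IsWeightedHomogeneous (mw n) (toM (ofM i)) :=
    (DirectSum.decompose (weightedHomogeneousSubmodule k (mw n)) f i).2
  have hmono : g = MvPolynomial.monomial (ofM i) (MvPolynomial.coeff (ofM i) g) :=
    eq_monomial_of_weighted_homogeneous hghom
  by_cases hc : MvPolynomial.coeff (ofM i) g = 0
  · rw [hmono, hc, map_zero]; exact Ideal.zero_mem _
  · obtain ⟨c, hc0, hmono⟩ : ∃ c : k, c ≠ 0 ∧ g = MvPolynomial.monomial (ofM i) c :=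
      ⟨_, hc, hmono⟩
    -- the monic monomial is in `√(mono I) ≤ √I`, hence a generator of `mono √I`
    have hmem : MvPolynomial.monomial (ofM i) (1 : k) ∈ I.radical := by
      have h1 : c⁻¹ • g ∈ (mono I).radical := Submodule.smul_of_tower_mem _ _ hgrad
      have h2 : (mono I).radical ≤ I.radical :=
        Ideal.radical_mono (by rw [mono]; exact Ideal.span_le.2 fun x hx => hx.2)
      have he : c⁻¹ • g = MvPolynomial.monomial (ofM i) 1 := by
        rw [hmono, smul_monomial, smul_eq_mul, inv_mul_cancel₀ hc0]
      exact h2 (he ▸ h1)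
    have he2 : g = c • MvPolynomial.monomial (ofM i) (1 : k) := by
      rw [smul_monomial, smul_eq_mul, mul_one]; exact hmono
    rw [he2]
    exact Submodule.smul_of_tower_mem _ _ (Ideal.subset_span ⟨⟨ofM i, rfl⟩, hmem⟩)
end

section
/- If I is a prime ideal of R, then mono(I) is prime (or the unit ideal case excluded: mono(I) is a prime ideal since mono(I) ⊆ I ≠ R). -/
open MvPolynomial
attribute [local instance] Classical.propDecidable

section aux

variable {k : Type*} [Field k] {n : ℕ}

/-- the killing map -/
noncomputable def killPhi (T : Set (Fin n)) :
    MvPolynomial (Fin n) k →ₐ[k] MvPolynomial (Fin n) k :=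
  aeval fun i => if i ∈ T then 0 else X i

lemma killPhi_eq_zero_iff (T : Set (Fin n)) (f : MvPolynomial (Fin n) k) :
    killPhi T f = 0 ↔ ∀ m ∈ f.support, ∃ i ∈ T, (m : Fin n →₀ ℕ) i ≠ 0 := by
  have key : killPhi T f = ∑ v ∈ f.support,
      if (∃ i ∈ T, (v : Fin n →₀ ℕ) i ≠ 0) then 0 else monomial v (coeff v f) := by
    conv_lhs => rw [f.as_sum]
    rw [map_sum]
    refine Finset.sum_congr rfl fun v hv => ?_
    rw [killPhi, aeval_monomial]
    split_ifs with h
    · obtain ⟨i, hiT, hvi⟩ := h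
      rw [Finsupp.prod]
      rw [Finset.prod_eq_zero (Finsupp.mem_support_iff.mpr hvi)]
      · simp
      · simp [hiT, zero_pow hvi]
    · push_neg at h
      rw [monomial_eq]
      congr 1
      refine Finsupp.prod_congr fun i hi => ?_
      rw [if_neg]
      intro hiT
      exact Finsupp.mem_support_iff.mp hi (h i hiT)
  constructor
  · intro h0 m hm
    by_contra hc
    push_neg at hc
    have : coeff m (killPhi T f) = coeff m f := by
      rw [key, coeff_sum]
      rw [Finset.sum_eq_single m]
      · rw [if_neg, coeff_monomial, if_pos rfl]
        push_neg; exact hc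
      · intro v hv hvm
        split_ifs with h
        · simp
        · rw [coeff_monomial, if_neg hvm]
      · intro h; exact absurd hm h
    rw [h0, coeff_zero] at this
    exact MvPolynomial.mem_support_iff.mp hm this.symm
  · intro h
    rw [key]
    refine Finset.sum_eq_zero fun v hv => ?_
    rw [if_pos (h v hv)]

lemma span_X_eq_ker (T : Set (Fin n)) :
    Ideal.span (X '' T : Set (MvPolynomial (Fin n) k)) =
      RingHom.ker (killPhi (k := k) T).toRingHom := by
  apply le_antisymm
  · rw [Ideal.span_le]
    rintro _ ⟨i, hi, rfl⟩
    simp [RingHom.mem_ker, killPhi, hi]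
  · intro f hf
    rw [mem_ideal_span_X_image]
    rw [RingHom.mem_ker] at hf
    exact (killPhi_eq_zero_iff T f).mp hf

lemma monomial_mem_prime {I : Ideal (MvPolynomial (Fin n) k)} (hI : I.IsPrime) :
    ∀ d : ℕ, ∀ s : Fin n →₀ ℕ, (∑ j, s j) ≤ d →
      (monomial s (1 : k)) ∈ I → ∃ i, s i ≠ 0 ∧ X i ∈ I := by
  intro d
  induction d with
  | zero =>
    intro s hs hmem
    exfalso
    have hz : ∀ j ∈ Finset.univ, s j = 0 :=
      Finset.sum_eq_zero_iff.mp (Nat.le_zero.mp hs)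
    have : s = 0 := Finsupp.ext fun j => hz j (Finset.mem_univ j)
    subst this
    rw [monomial_zero', C_1] at hmem
    exact hI.ne_top (Ideal.eq_top_of_isUnit_mem I hmem isUnit_one)
  | succ d ih =>
    intro s hs hmem
    by_cases h0 : s = 0
    · subst h0
      rw [monomial_zero', C_1] at hmem
      exact absurd (Ideal.eq_top_of_isUnit_mem I hmem isUnit_one) hI.ne_top
    · obtain ⟨i, hi⟩ : ∃ i, s i ≠ 0 := by
        by_contra hc; push_neg at hc
        exact h0 (Finsupp.ext fun i => hc i)
      have hle : Finsupp.single i 1 ≤ s := by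
        rw [Finsupp.single_le_iff]
        omega
      have hsplit : monomial s (1 : k) =
          X i * monomial ((s - Finsupp.single i 1 : Fin n →₀ ℕ)) 1 := by
        rw [X, monomial_mul, one_mul, add_tsub_cancel_of_le hle]
      rw [hsplit] at hmem
      rcases hI.mem_or_mem hmem with h | h
      · exact ⟨i, hi, h⟩
      · have hdeg : (∑ j, ((s - Finsupp.single i 1 : Fin n →₀ ℕ)) j) ≤ d := by
          have : (∑ j, s j) = (∑ j, ((s - Finsupp.single i 1 : Fin n →₀ ℕ)) j) + 1 := by
            have h1 : ∀ j, s j = ((s - Finsupp.single i 1 : Fin n →₀ ℕ)) j + Finsupp.single i 1 j := by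
              intro j
              rw [Finsupp.tsub_apply]
              have : Finsupp.single i 1 j ≤ s j := hle j
              omega
            rw [Finset.sum_congr rfl fun j _ => h1 j, Finset.sum_add_distrib]
            congr 1
            simp [Finsupp.single_apply]
          omega
        obtain ⟨j, hj, hXj⟩ := ih _ hdeg h
        refine ⟨j, ?_, hXj⟩
        intro hsj
        apply hj
        rw [Finsupp.tsub_apply, hsj]
        simp
      
theorem mono_eq_span_X {I : Ideal (MvPolynomial (Fin n) k)} (hI : I.IsPrime) :
    mono I = Ideal.span (X '' {i | X i ∈ I} : Set (MvPolynomial (Fin n) k)) := by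
  apply le_antisymm
  · rw [mono, Ideal.span_le]
    rintro f ⟨⟨s, rfl⟩, hfI⟩
    rw [SetLike.mem_coe, mem_ideal_span_X_image]
    intro m hm
    have hm' : m = s := by
      have := MvPolynomial.support_monomial (s := s) (a := (1:k))
      rw [if_neg one_ne_zero] at this
      simpa [this] using hm
    subst hm'
    obtain ⟨i, hi, hXi⟩ := monomial_mem_prime hI (∑ j, m j) m le_rfl hfI
    exact ⟨i, hXi, hi⟩
  · rw [Ideal.span_le]
    rintro _ ⟨i, hi, rfl⟩
    apply Ideal.subset_span
    exact ⟨⟨Finsupp.single i 1, rfl⟩, hi⟩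

end aux

theorem mono_isPrime {k : Type*} [Field k] {n : ℕ}
    (I : Ideal (MvPolynomial (Fin n) k)) (hI : I.IsPrime) :
    (mono I).IsPrime := by
  rw [mono_eq_span_X hI, span_X_eq_ker]
  constructor
  · intro h
    rw [Ideal.eq_top_iff_one, RingHom.mem_ker, map_one] at h
    exact one_ne_zero h
  · intro f g hfg
    rw [RingHom.mem_ker, map_mul] at hfg
    rcases mul_eq_zero.mp hfg with h | h
    · exact Or.inl h
    · exact Or.inr h
end

section
/- If I is a primary ideal of R, then mono(I) is primary. -/
open MvPolynomial

section Aux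

variable {k : Type*} [Field k] {n : ℕ}

lemma mono_le (I : Ideal (MvPolynomial (Fin n) k)) : mono I ≤ I :=
  Ideal.span_le.mpr fun _ hf => hf.2

lemma monomial_mem_mono {I : Ideal (MvPolynomial (Fin n) k)} {s : Fin n →₀ ℕ}
    (h : (monomial s 1 : MvPolynomial (Fin n) k) ∈ I) : (monomial s 1 : MvPolynomial (Fin n) k) ∈ mono I :=
  Ideal.subset_span ⟨⟨s, rfl⟩, h⟩

lemma mem_mono_iff {I : Ideal (MvPolynomial (Fin n) k)} {f : MvPolynomial (Fin n) k} :
    f ∈ mono I ↔ ∀ s ∈ f.support, (monomial s 1 : MvPolynomial (Fin n) k) ∈ I := by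
  have hset : {f : MvPolynomial (Fin n) k | IsMonomial f ∧ f ∈ I} =
      (fun s => (monomial s 1 : MvPolynomial (Fin n) k)) ''
        {s : Fin n →₀ ℕ | (monomial s 1 : MvPolynomial (Fin n) k) ∈ I} := by
    ext g
    constructor
    · rintro ⟨⟨s, rfl⟩, hg⟩; exact ⟨s, hg, rfl⟩
    · rintro ⟨s, hs, rfl⟩; exact ⟨⟨s, rfl⟩, hs⟩
  rw [mono, hset, mem_ideal_span_monomial_image]
  constructor
  · intro H s hs
    obtain ⟨t, ht, hle⟩ := H s hs
    have hst : (monomial s 1 : MvPolynomial (Fin n) k)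
        = monomial (s - t) 1 * monomial t 1 := by
      rw [monomial_mul, one_mul, tsub_add_cancel_of_le hle]
    rw [hst]
    exact Ideal.mul_mem_left _ _ ht
  · intro H s hs
    exact ⟨s, H s hs, le_rfl⟩

/-- The lex-largest exponent of a nonzero polynomial. -/
noncomputable def maxExp (p : MvPolynomial (Fin n) k) (hp : p ≠ 0) : Fin n →₀ ℕ :=
  ofLex ((p.support.image toLex).max'
    (Finset.Nonempty.image (support_nonempty.mpr hp) _))

lemma maxExp_mem (p : MvPolynomial (Fin n) k) (hp : p ≠ 0) : maxExp p hp ∈ p.support := by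
  have := (p.support.image toLex).max'_mem (Finset.Nonempty.image (support_nonempty.mpr hp) _)
  rw [Finset.mem_image] at this
  obtain ⟨s, hs, hst⟩ := this
  have : s = maxExp p hp := by
    have := congrArg ofLex hst
    simpa [maxExp] using this
  rwa [← this]

lemma le_maxExp (p : MvPolynomial (Fin n) k) (hp : p ≠ 0) {s : Fin n →₀ ℕ} (hs : s ∈ p.support) :
    toLex s ≤ toLex (maxExp p hp) := by
  have h := Finset.le_max' (p.support.image toLex) (toLex s) (Finset.mem_image_of_mem _ hs)
  simpa [maxExp] using h

lemma coeff_maxExp_add (c h : MvPolynomial (Fin n) k) (hc : c ≠ 0) (hh : h ≠ 0) :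
    coeff (maxExp c hc + maxExp h hh) (c * h)
      = coeff (maxExp c hc) c * coeff (maxExp h hh) h := by
  classical
  rw [coeff_mul]
  apply Finset.sum_eq_single_of_mem (maxExp c hc, maxExp h hh) (Finset.HasAntidiagonal.mem_antidiagonal.mpr rfl)
  rintro ⟨t, m⟩ hmem hne
  rw [Finset.HasAntidiagonal.mem_antidiagonal] at hmem
  by_contra hC
  have ht : t ∈ c.support := mem_support_iff.mpr (left_ne_zero_of_mul hC)
  have hm : m ∈ h.support := mem_support_iff.mpr (right_ne_zero_of_mul hC)
  have h1 : toLex t ≤ toLex (maxExp c hc) := le_maxExp c hc ht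
  have h2 : toLex m ≤ toLex (maxExp h hh) := le_maxExp h hh hm
  have hadd : toLex t + toLex m = toLex (maxExp c hc) + toLex (maxExp h hh) := by
    rw [← toLex_add, ← toLex_add, hmem]
  rcases h1.lt_or_eq with hlt | heq
  · exact (ne_of_lt (add_lt_add_of_lt_of_le hlt h2)) hadd
  · rcases h2.lt_or_eq with hlt2 | heq2
    · exact (ne_of_lt (add_lt_add_of_le_of_lt h1 hlt2)) hadd
    · exact hne (Prod.ext (toLex.injective heq) (toLex.injective heq2))

/-- Monomials whose power lies in no power of `I.radical` are regular modulo `mono I`: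
if `c` is a nonzero polynomial all of whose monomials lie outside `I.radical`,
then `c * h ∈ mono I` implies `h ∈ mono I`. -/
lemma regular_mono {I : Ideal (MvPolynomial (Fin n) k)} (hI : I.IsPrimary)
    {c : MvPolynomial (Fin n) k} (hc0 : c ≠ 0)
    (hc : ∀ s ∈ c.support, (monomial s 1 : MvPolynomial (Fin n) k) ∉ I.radical) :
    ∀ h : MvPolynomial (Fin n) k, c * h ∈ mono I → h ∈ mono I := by
  classical
  suffices H : ∀ (N : ℕ) (h : MvPolynomial (Fin n) k),
      h.support.card ≤ N → c * h ∈ mono I → h ∈ mono I by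
    intro h hh
    exact H h.support.card h le_rfl hh
  intro N
  induction N with
  | zero =>
    intro h hcard _
    have : h = 0 := by
      rw [← support_eq_empty, ← Finset.card_eq_zero]
      omega
    rw [this]
    exact Ideal.zero_mem _
  | succ N IH =>
    intro h hcard hch
    by_cases h0 : h = 0
    · rw [h0]; exact Ideal.zero_mem _
    set m0 := maxExp h h0 with hm0def
    set t0 := maxExp c hc0 with ht0def
    -- the coefficient of `t0 + m0` in `c * h` is nonzero
    have hkey : coeff (t0 + m0) (c * h) ≠ 0 := by
      rw [coeff_maxExp_add c h hc0 h0]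
      exact mul_ne_zero (mem_support_iff.mp (maxExp_mem c hc0))
        (mem_support_iff.mp (maxExp_mem h h0))
    have hmemI : (monomial (t0 + m0) 1 : MvPolynomial (Fin n) k) ∈ I :=
      mem_mono_iff.mp hch _ (mem_support_iff.mpr hkey)
    have hm0I : (monomial m0 1 : MvPolynomial (Fin n) k) ∈ I := by
      have hprod : (monomial m0 1 : MvPolynomial (Fin n) k) * monomial t0 1 ∈ I := by
        rw [monomial_mul, one_mul, add_comm]
        exact hmemI
      rcases (Ideal.isPrimary_iff.mp hI).2 hprod with h1 | h2
      · exact h1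
      · exact absurd h2 (hc t0 (maxExp_mem c hc0))
    -- remove the leading term of h
    set h' := h - monomial m0 (coeff m0 h) with hh'def
    have hsub : h'.support ⊆ h.support.erase m0 := by
      intro s hs
      rw [mem_support_iff] at hs
      rw [hh'def, coeff_sub, coeff_monomial] at hs
      rcases eq_or_ne m0 s with rfl | hne
      · simp at hs
      · rw [if_neg hne] at hs
        refine Finset.mem_erase.mpr ⟨fun h => hne h.symm, mem_support_iff.mpr ?_⟩
        simpa using hs
    have hmono0 : (monomial m0 (coeff m0 h) : MvPolynomial (Fin n) k) ∈ mono I := by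
      have : (monomial m0 (coeff m0 h) : MvPolynomial (Fin n) k)
          = C (coeff m0 h) * monomial m0 1 := by
        rw [C_mul_monomial, mul_one]
      rw [this]
      exact Ideal.mul_mem_left _ _ (monomial_mem_mono hm0I)
    have hch' : c * h' ∈ mono I := by
      have : c * h' = c * h - c * monomial m0 (coeff m0 h) := by
        rw [hh'def]; ring
      rw [this]
      exact Submodule.sub_mem _ hch (Ideal.mul_mem_left _ _ hmono0)
    have hcard' : h'.support.card ≤ N := by
      have h1 := Finset.card_le_card hsub
      have h2 : (h.support.erase m0).card < h.support.card :=
        Finset.card_erase_lt_of_mem (maxExp_mem h h0)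
      omega
    have hh'mem := IH h' hcard' hch'
    have : h = h' + monomial m0 (coeff m0 h) := by rw [hh'def]; ring
    rw [this]
    exact Ideal.add_mem _ hh'mem hmono0

end Aux

theorem mono_isPrimary {k : Type*} [Field k] {n : ℕ}
    (I : Ideal (MvPolynomial (Fin n) k)) (hI : I.IsPrimary) :
    (mono I).IsPrimary := by
  classical
  obtain ⟨hItop, hIp⟩ := Ideal.isPrimary_iff.mp hI
  rw [Ideal.isPrimary_iff]
  constructor
  · intro htop
    exact hItop (top_unique (htop ▸ mono_le I))
  · intro f g hfg
    by_cases hg : g ∈ (mono I).radical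
    · exact Or.inr hg
    left
    -- split g into the part with monomials in I.radical and the rest
    set q : (Fin n →₀ ℕ) → Prop := fun t => (monomial t 1 : MvPolynomial (Fin n) k) ∈ I.radical
      with hqdef
    set g2 : MvPolynomial (Fin n) k :=
      ∑ t ∈ g.support.filter (fun t => ¬ q t), monomial t (coeff t g) with hg2def
    set g1 : MvPolynomial (Fin n) k :=
      ∑ t ∈ g.support.filter (fun t => q t), monomial t (coeff t g) with hg1def
    have hsplit : g1 + g2 = g := by
      rw [hg1def, hg2def, Finset.sum_filter_add_sum_filter_not]
      exact (as_sum g).symm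
    have hg1rad : g1 ∈ (mono I).radical := by
      rw [hg1def]
      apply Submodule.sum_mem
      intro t ht
      rw [Finset.mem_filter] at ht
      obtain ⟨m, hm⟩ := ht.2
      have : (monomial t 1 : MvPolynomial (Fin n) k) ∈ (mono I).radical := by
        refine ⟨m, ?_⟩
        rw [monomial_pow, one_pow] at hm ⊢
        exact monomial_mem_mono hm
      have h2 : (monomial t (coeff t g) : MvPolynomial (Fin n) k)
          = C (coeff t g) * monomial t 1 := by rw [C_mul_monomial, mul_one]
      rw [h2]
      exact Ideal.mul_mem_left _ _ this
    have hg2supp : ∀ s ∈ g2.support, (monomial s 1 : MvPolynomial (Fin n) k) ∉ I.radical := by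
      intro s hs
      rw [mem_support_iff, hg2def, coeff_sum] at hs
      have : ∃ t ∈ g.support.filter (fun t => ¬ q t),
          coeff s (monomial t (coeff t g)) ≠ 0 := by
        by_contra hcon
        push_neg at hcon
        exact hs (Finset.sum_eq_zero hcon)
      obtain ⟨t, htmem, htne⟩ := this
      rw [coeff_monomial] at htne
      have hts : t = s := by
        by_contra hne
        rw [if_neg hne] at htne
        exact htne rfl
      rw [Finset.mem_filter] at htmem
      rw [← hts]
      exact htmem.2
    have hg2ne : g2 ≠ 0 := by
      intro h0
      apply hg
      rw [← hsplit, h0, add_zero]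
      exact hg1rad
    obtain ⟨N, hN⟩ := Ideal.exists_radical_pow_le_of_fg (mono I) (IsNoetherian.noetherian _)
    have claim : ∀ d : ℕ, f * g1 ^ (N - d) ∈ mono I := by
      intro d
      induction d with
      | zero =>
        simpa using Ideal.mul_mem_left _ f (hN (Ideal.pow_mem_pow hg1rad N))
      | succ d IH =>
        by_cases hd : d < N
        · have hstep : g2 * (f * g1 ^ (N - (d + 1))) ∈ mono I := by
            have e1 : f * g1 ^ (N - (d + 1)) * g ∈ mono I := by
              have : f * g1 ^ (N - (d + 1)) * g = g1 ^ (N - (d + 1)) * (f * g) := by ring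
              rw [this]
              exact Ideal.mul_mem_left _ _ hfg
            have e2 : f * g1 ^ (N - (d + 1)) * g1 ∈ mono I := by
              have : f * g1 ^ (N - (d + 1)) * g1 = f * g1 ^ (N - d) := by
                rw [mul_assoc, ← pow_succ]
                congr 2
                omega
              rw [this]
              exact IH
            have : g2 * (f * g1 ^ (N - (d + 1)))
                = f * g1 ^ (N - (d + 1)) * g - f * g1 ^ (N - (d + 1)) * g1 := by
              rw [← hsplit]; ring
            rw [this]
            exact Submodule.sub_mem _ e1 e2
          exact regular_mono hI hg2ne hg2supp _ hstep
        · have : N - (d + 1) = N - d := by omega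
          rw [this]
          exact IH
    have := claim N
    simpa using this
end

section
/- Any nonzerodivisor on R/I is a nonzerodivisor on R/mono(I). -/
open MvPolynomial

section MonoAux

variable {k : Type*} [Field k] {n : ℕ} (I : Ideal (MvPolynomial (Fin n) k))

lemma mono_le_s8 : mono I ≤ I :=
  Ideal.span_le.mpr fun _ hf => hf.2

lemma monomial_mem_up {a b : Fin n →₀ ℕ} (h : (monomial b 1 : MvPolynomial (Fin n) k) ∈ I) :
    (monomial (a + b) 1 : MvPolynomial (Fin n) k) ∈ I := by
  have : (monomial (a + b) 1 : MvPolynomial (Fin n) k) = monomial a 1 * monomial b 1 := by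
    rw [monomial_mul, one_mul]
  rw [this]
  exact Ideal.mul_mem_left _ _ h

lemma mem_mono_of_support {f : MvPolynomial (Fin n) k}
    (h : ∀ d ∈ f.support, (monomial d 1 : MvPolynomial (Fin n) k) ∈ I) : f ∈ mono I := by
  rw [f.as_sum]
  refine Ideal.sum_mem _ fun d hd => ?_
  have he : (monomial d (f.coeff d) : MvPolynomial (Fin n) k) = C (f.coeff d) * monomial d 1 := by
    rw [C_mul_monomial, mul_one]
  rw [he]
  exact Ideal.mul_mem_left _ _ (Ideal.subset_span ⟨⟨d, rfl⟩, h d hd⟩)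

lemma support_of_mem_mono {f : MvPolynomial (Fin n) k} (hf : f ∈ mono I) :
    ∀ d ∈ f.support, (monomial d 1 : MvPolynomial (Fin n) k) ∈ I := by
  classical
  refine Submodule.span_induction ?_ ?_ ?_ ?_ hf
  · rintro g ⟨⟨s, rfl⟩, hgI⟩ d hd
    rw [support_monomial, if_neg one_ne_zero, Finset.mem_singleton] at hd
    subst hd; exact hgI
  · intro d hd; simp at hd
  · intro g₁ g₂ _ _ h₁ h₂ d hd
    rcases Finset.mem_union.mp (Finsupp.support_add hd) with h | h
    · exact h₁ d h
    · exact h₂ d h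
  · intro a g _ hg d hd
    rw [smul_eq_mul] at hd
    obtain ⟨u, hu, v, hv, rfl⟩ := Finset.mem_add.mp (support_mul a g hd)
    exact monomial_mem_up I (hg v hv)

lemma coeff_sum_monomial (T : Finset (Fin n →₀ ℕ)) (f : MvPolynomial (Fin n) k)
    (e : Fin n →₀ ℕ) :
    (∑ d ∈ T, (monomial d (f.coeff d) : MvPolynomial (Fin n) k)).coeff e
      = if e ∈ T then f.coeff e else 0 := by
  classical
  rw [coeff_sum]
  simp only [coeff_monomial]
  exact Finset.sum_ite_eq' T e _

end MonoAux


theorem nonzerodivisor_mono {k : Type*} [Field k] {n : ℕ}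
    (I : Ideal (MvPolynomial (Fin n) k)) (r : MvPolynomial (Fin n) k)
    (hr : ∀ x : MvPolynomial (Fin n) k, r * x ∈ I → x ∈ I) :
    ∀ x : MvPolynomial (Fin n) k, r * x ∈ mono I → x ∈ mono I := by
  classical
  intro x hx
  by_contra hxm
  -- the "bad" exponents of a polynomial: support exponents whose monomial is not in I
  let bad : MvPolynomial (Fin n) k → Finset (Fin n →₀ ℕ) :=
    fun f => f.support.filter fun d => (monomial d 1 : MvPolynomial (Fin n) k) ∉ I
  have bad_x : (bad x).Nonempty := by
    by_contra h
    refine hxm (mem_mono_of_support I fun d hd => ?_)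
    by_contra hdI
    exact h ⟨d, Finset.mem_filter.mpr ⟨hd, hdI⟩⟩
  -- minimize the number of bad exponents over all monomial shifts of x
  let S : Set ℕ := {s | ∃ δ : Fin n →₀ ℕ,
    (bad ((monomial δ 1 : MvPolynomial (Fin n) k) * x)).Nonempty ∧
    (bad ((monomial δ 1 : MvPolynomial (Fin n) k) * x)).card = s}
  have hone : (monomial (0 : Fin n →₀ ℕ) (1 : k) : MvPolynomial (Fin n) k) * x = x := by
    rw [monomial_zero', C_1, one_mul]
  have hS : (bad x).card ∈ S := ⟨0, by rw [hone]; exact bad_x, by rw [hone]⟩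
  obtain ⟨s, hsS, hmin⟩ := Nat.lt_wfRel.wf.has_min S ⟨_, hS⟩
  obtain ⟨δ₀, hBne, hBcard⟩ := hsS
  set w : MvPolynomial (Fin n) k := (monomial δ₀ 1 : MvPolynomial (Fin n) k) * x with hw
  set B : Finset (Fin n →₀ ℕ) := bad w with hB
  have hrw : r * w ∈ mono I := by
    have h1 : r * w = (monomial δ₀ 1 : MvPolynomial (Fin n) k) * (r * x) := by rw [hw]; ring
    rw [h1]; exact Ideal.mul_mem_left _ _ hx
  -- all bad exponents of w escape into I simultaneously
  have colon : ∀ γ₁ ∈ B, ∀ γ₂ ∈ B, ∀ δ : Fin n →₀ ℕ,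
      (monomial (δ + γ₁) 1 : MvPolynomial (Fin n) k) ∉ I →
      (monomial (δ + γ₂) 1 : MvPolynomial (Fin n) k) ∉ I := by
    intro γ₁ h₁ γ₂ h₂ δ hδ₁ hδ₂
    set w₂ : MvPolynomial (Fin n) k := (monomial δ 1 : MvPolynomial (Fin n) k) * w with hw₂
    have hw₂' : w₂ = (monomial (δ + δ₀) 1 : MvPolynomial (Fin n) k) * x := by
      rw [hw₂, hw, ← mul_assoc, monomial_mul, one_mul]
    have hcoeff : ∀ e, w₂.coeff (δ + e) = w.coeff e := by
      intro e
      rw [hw₂, coeff_monomial_mul, one_mul]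
    -- δ + γ₁ is a bad exponent of w₂
    have hmem : δ + γ₁ ∈ bad w₂ := by
      refine Finset.mem_filter.mpr ⟨mem_support_iff.mpr ?_, hδ₁⟩
      rw [hcoeff]
      exact mem_support_iff.mp (Finset.mem_filter.mp h₁).1
    -- bad w₂ injects into a proper subset of B
    have hsub : bad w₂ ⊆
        (B.filter fun d => (monomial (δ + d) 1 : MvPolynomial (Fin n) k) ∉ I).image
          (fun d => δ + d) := by
      intro e he
      obtain ⟨hesupp, heI⟩ := Finset.mem_filter.mp he
      obtain ⟨u, hu, v, hv, rfl⟩ := Finset.mem_add.mp (support_mul _ _ hesupp)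
      rw [support_monomial, if_neg one_ne_zero, Finset.mem_singleton] at hu
      subst hu
      have hvB : v ∈ B := by
        refine Finset.mem_filter.mpr ⟨hv, fun hvI => heI (monomial_mem_up I hvI)⟩
      exact Finset.mem_image.mpr ⟨v, Finset.mem_filter.mpr ⟨hvB, heI⟩, rfl⟩
    have hlt : (bad w₂).card < s := by
      have h1 : (B.filter fun d => (monomial (δ + d) 1 : MvPolynomial (Fin n) k) ∉ I) ⊂ B := by
        refine Finset.ssubset_iff_of_subset (Finset.filter_subset _ _) |>.mpr ?_
        exact ⟨γ₂, h₂, fun hc => (Finset.mem_filter.mp hc).2 hδ₂⟩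
      calc (bad w₂).card ≤ _ := Finset.card_le_card hsub
        _ ≤ _ := Finset.card_image_le
        _ < B.card := Finset.card_lt_card h1
        _ = s := hBcard
    exact hmin _ ⟨δ + δ₀, by rw [← hw₂']; exact ⟨_, hmem⟩, by rw [← hw₂']⟩ hlt
  -- pick a bad exponent γ of w
  obtain ⟨γ, hγB⟩ := hBne
  have hγB' : γ ∈ B := hγB
  have hγI : (monomial γ 1 : MvPolynomial (Fin n) k) ∉ I := (Finset.mem_filter.mp hγB').2
  by_cases hA : ∀ a ∈ r.support, (monomial (a + γ) 1 : MvPolynomial (Fin n) k) ∈ I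
  · -- then r * X^γ ∈ I, contradicting hr
    have hmem : r * (monomial γ 1 : MvPolynomial (Fin n) k) ∈ mono I := by
      refine mem_mono_of_support I fun e he => ?_
      obtain ⟨u, hu, v, hv, rfl⟩ := Finset.mem_add.mp (support_mul _ _ he)
      rw [support_monomial, if_neg one_ne_zero, Finset.mem_singleton] at hv
      subst hv
      exact hA u hu
    exact hγI (hr _ (mono_le_s8 I hmem))
  · push_neg at hA
    obtain ⟨a₀, ha₀r, ha₀I⟩ := hA
    -- bad part of w and the part of r that does not move γ into I
    set w' : MvPolynomial (Fin n) k := ∑ d ∈ B, monomial d (w.coeff d) with hw'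
    set A : Finset (Fin n →₀ ℕ) :=
      r.support.filter fun a => (monomial (a + γ) 1 : MvPolynomial (Fin n) k) ∉ I with hA'
    set r' : MvPolynomial (Fin n) k := ∑ a ∈ A, monomial a (r.coeff a) with hr'
    have hw'coeff : ∀ e, w'.coeff e = if e ∈ B then w.coeff e else 0 := fun e => by
      rw [hw']; exact coeff_sum_monomial B w e
    have hr'coeff : ∀ e, r'.coeff e = if e ∈ A then r.coeff e else 0 := fun e => by
      rw [hr']; exact coeff_sum_monomial A r e
    have hw'supp : w'.support ⊆ B := by
      intro e he
      have := mem_support_iff.mp he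
      rw [hw'coeff] at this
      by_contra hc; rw [if_neg hc] at this; exact this rfl
    -- w - w' ∈ mono I
    have hwmw' : w - w' ∈ mono I := by
      refine mem_mono_of_support I fun d hd => ?_
      have hcd := mem_support_iff.mp hd
      rw [coeff_sub, hw'coeff] at hcd
      by_cases hdB : d ∈ B
      · rw [if_pos hdB, sub_self] at hcd; exact absurd rfl hcd
      · rw [if_neg hdB, sub_zero] at hcd
        by_contra hdI
        exact hdB (Finset.mem_filter.mpr ⟨mem_support_iff.mpr hcd, hdI⟩)
    have hrw' : r * w' ∈ mono I := by
      have h1 : r * w' = r * w - r * (w - w') := by ring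
      rw [h1]
      exact Ideal.sub_mem _ hrw (Ideal.mul_mem_left _ _ hwmw')
    -- (r - r') * w' ∈ mono I
    have hrr'w' : (r - r') * w' ∈ mono I := by
      refine mem_mono_of_support I fun e he => ?_
      obtain ⟨u, hu, v, hv, rfl⟩ := Finset.mem_add.mp (support_mul _ _ he)
      have hcu := mem_support_iff.mp hu
      rw [coeff_sub, hr'coeff] at hcu
      by_cases huA : u ∈ A
      · rw [if_pos huA, sub_self] at hcu; exact absurd rfl hcu
      · rw [if_neg huA, sub_zero] at hcu
        have hur : u ∈ r.support := mem_support_iff.mpr hcu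
        have huγ : (monomial (u + γ) 1 : MvPolynomial (Fin n) k) ∈ I := by
          by_contra hc
          exact huA (Finset.mem_filter.mpr ⟨hur, hc⟩)
        by_contra hc
        exact colon (v) (hw'supp hv) γ hγB' u hc huγ
    have hr'w' : r' * w' ∈ mono I := by
      have h1 : r' * w' = r * w' - (r - r') * w' := by ring
      rw [h1]
      exact Ideal.sub_mem _ hrw' hrr'w'
    -- but r' * w' ≠ 0 and all its support exponents are not in I: contradiction
    have hr'ne : r' ≠ 0 := by
      intro hc
      have := hr'coeff a₀
      rw [hc, coeff_zero, if_pos (Finset.mem_filter.mpr ⟨ha₀r, ha₀I⟩)] at this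
      exact mem_support_iff.mp ha₀r this.symm
    have hw'ne : w' ≠ 0 := by
      intro hc
      have := hw'coeff γ
      rw [hc, coeff_zero, if_pos hγB'] at this
      exact mem_support_iff.mp (Finset.mem_filter.mp hγB').1 this.symm
    obtain ⟨e, he⟩ := support_nonempty.mpr (mul_ne_zero hr'ne hw'ne)
    obtain ⟨u, hu, v, hv, rfl⟩ := Finset.mem_add.mp (support_mul _ _ he)
    have huA : u ∈ A := by
      have := mem_support_iff.mp hu
      rw [hr'coeff] at this
      by_contra hc; rw [if_neg hc] at this; exact this rfl
    have huγ : (monomial (u + γ) 1 : MvPolynomial (Fin n) k) ∉ I := (Finset.mem_filter.mp huA).2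
    have : (monomial (u + v) 1 : MvPolynomial (Fin n) k) ∈ I :=
      support_of_mem_mono I hr'w' _ he
    exact colon γ hγB' v (hw'supp hv) u huγ this
end

section
/- If u ∈ R is a monomial that is a nonzerodivisor on R/I, then mono(u·I) = u·mono(I). -/
open MvPolynomial

theorem mono_monomial_mul' {k : Type*} [Field k] {n : ℕ}
    (I : Ideal (MvPolynomial (Fin n) k)) (u : MvPolynomial (Fin n) k)
    (hu : ∃ s : Fin n →₀ ℕ, u = MvPolynomial.monomial s 1)
    (hnzd : ∀ x : MvPolynomial (Fin n) k, u * x ∈ I → x ∈ I) :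
    Ideal.span {f | (∃ s : Fin n →₀ ℕ, f = MvPolynomial.monomial s 1) ∧ f ∈ Ideal.span {u} * I}
      = Ideal.span {u} * Ideal.span {f | (∃ s : Fin n →₀ ℕ, f = MvPolynomial.monomial s 1) ∧ f ∈ I} := by
  obtain ⟨t, rfl⟩ := hu
  have hm0 : (monomial t (1:k)) ≠ 0 := by
    simp [MvPolynomial.monomial_eq_zero]
  apply le_antisymm
  · rw [Ideal.span_le]
    rintro f ⟨⟨s, rfl⟩, hf⟩
    rw [Ideal.mem_span_singleton_mul] at hf
    obtain ⟨z, hz, hzeq⟩ := hf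
    have ht : t ≤ s := by
      by_contra h
      have := congrArg (coeff s) hzeq
      rw [coeff_monomial_mul', if_neg h, coeff_monomial, if_pos rfl] at this
      exact one_ne_zero this.symm
    have hzm : z = monomial (s - t) 1 := by
      apply mul_left_cancel₀ hm0
      rw [hzeq, monomial_mul, mul_one, add_tsub_cancel_of_le ht]
    rw [← hzeq]
    exact Ideal.mul_mem_mul (Ideal.mem_span_singleton_self _)
      (Ideal.subset_span ⟨⟨s - t, hzm⟩, hz⟩)
  · rw [Ideal.span_mul_span, Ideal.span_le]
    rintro x hx
    simp only [Set.mem_mul, Set.mem_singleton_iff, Set.mem_setOf_eq] at hx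
    obtain ⟨a, rfl, b, ⟨⟨s, rfl⟩, hb⟩, rfl⟩ := hx
    refine Ideal.subset_span ⟨⟨t + s, by rw [monomial_mul, mul_one]⟩, ?_⟩
    rw [Ideal.mem_span_singleton_mul]
    exact ⟨monomial s 1, hb, rfl⟩


theorem mono_monomial_mul {k : Type*} [Field k] {n : ℕ}
    (I : Ideal (MvPolynomial (Fin n) k)) (u : MvPolynomial (Fin n) k)
    (hu : IsMonomial u)
    (hnzd : ∀ x : MvPolynomial (Fin n) k, u * x ∈ I → x ∈ I) :
    mono (Ideal.span {u} * I) = Ideal.span {u} * mono I :=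
  mono_monomial_mul' I u hu hnzd
end

section
/- Let M be a monomial ideal and u₁ ≠ u₂ monomials not in M. Then mono(M + (u₁ + u₂)) = M if and only if M : u₁ = M : u₂. -/
open MvPolynomial

private lemma monomial_mem_mono_of_coeff_ne_zero {k : Type*} [Field k] {n : ℕ}
    (I : Ideal (MvPolynomial (Fin n) k)) {p : MvPolynomial (Fin n) k} (hp : p ∈ mono I) :
    ∀ s, coeff s p ≠ 0 → monomial s (1 : k) ∈ mono I := by
  refine Submodule.span_induction
    (p := fun x _ => ∀ s, coeff s x ≠ 0 → monomial s (1 : k) ∈ mono I) ?_ ?_ ?_ ?_ hp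
  · rintro x ⟨⟨t, rfl⟩, hxI⟩ s hs
    rw [coeff_monomial] at hs
    by_cases h : t = s
    · subst h
      exact Ideal.subset_span ⟨⟨t, rfl⟩, hxI⟩
    · simp [h] at hs
  · intro s hs
    simp at hs
  · intro x y _ _ hx hy s hs
    by_cases h : coeff s x ≠ 0
    · exact hx s h
    · push_neg at h
      rw [coeff_add, h, zero_add] at hs
      exact hy s hs
  · intro a x _ hx s hs
    rw [smul_eq_mul, coeff_mul] at hs
    obtain ⟨t, ht, hne⟩ := Finset.exists_ne_zero_of_sum_ne_zero hs
    have h2 : coeff t.2 x ≠ 0 := fun h => hne (by rw [h, mul_zero])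
    have := hx t.2 h2
    have hsum : t.1 + t.2 = s := Finset.HasAntidiagonal.mem_antidiagonal.mp ht
    have : monomial s (1 : k) = monomial t.1 (1 : k) * monomial t.2 1 := by
      rw [monomial_mul, one_mul, hsum]
    rw [this]
    exact Ideal.mul_mem_left _ _ (hx t.2 h2)

private lemma mem_of_support_monomials {k : Type*} [Field k] {n : ℕ}
    (J : Ideal (MvPolynomial (Fin n) k)) {p : MvPolynomial (Fin n) k}
    (h : ∀ s ∈ p.support, monomial s (1 : k) ∈ J) : p ∈ J := by
  nth_rewrite 1 [p.as_sum]
  exact Ideal.sum_mem _ fun s hs => by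
    have he : monomial s (coeff s p) = C (coeff s p) * monomial s 1 := by
      rw [C_mul_monomial, mul_one]
    rw [he]
    exact Ideal.mul_mem_left _ _ (h s hs)

private lemma mem_monomialIdeal_iff {k : Type*} [Field k] {n : ℕ}
    {M : Ideal (MvPolynomial (Fin n) k)} (hM : IsMonomialIdeal M)
    {p : MvPolynomial (Fin n) k} :
    p ∈ M ↔ ∀ s ∈ p.support, monomial s (1 : k) ∈ M := by
  constructor
  · intro hp s hs
    rw [← hM] at hp
    rw [← hM]
    exact monomial_mem_mono_of_coeff_ne_zero M hp s (mem_support_iff.mp hs)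
  · exact mem_of_support_monomials M

private lemma mem_colon_span_singleton {R : Type*} [CommRing R] (M : Ideal R) (u x : R) :
    x ∈ Submodule.colon M (Ideal.span {u}) ↔ u * x ∈ M := by
  rw [Submodule.mem_colon]
  constructor
  · intro h
    simpa [smul_eq_mul, mul_comm] using h u (Ideal.subset_span rfl)
  · intro h p hp
    obtain ⟨a, rfl⟩ := Ideal.mem_span_singleton'.mp hp
    have : x • (a * u) = a * (u * x) := by rw [smul_eq_mul]; ring
    rw [this]
    exact Ideal.mul_mem_left _ _ h

private lemma descent {k : Type*} [Field k] {n : ℕ}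
    {M : Ideal (MvPolynomial (Fin n) k)} (hM : IsMonomialIdeal M)
    {s₁ s₂ : Fin n →₀ ℕ} (hlt : toLex s₁ < toLex s₂)
    (hexp : ∀ σ : Fin n →₀ ℕ,
      ((monomial (σ + s₁) (1:k) ∈ M) ↔ (monomial (σ + s₂) (1:k) ∈ M)))
    {τ : Fin n →₀ ℕ} (hτ : monomial τ (1:k) ∉ M)
    {f g : MvPolynomial (Fin n) k} (hf : f ∈ M)
    (heq : (monomial τ (1:k)) = f + g * (monomial s₁ 1 + monomial s₂ 1)) : False := by
  classical
  have hcf : ∀ ρ, monomial ρ (1:k) ∉ M → coeff ρ f = 0 := by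
    intro ρ h
    by_contra hc
    exact h ((mem_monomialIdeal_iff hM).mp hf ρ (mem_support_iff.mpr hc))
  have E : ∀ ρ, (if τ = ρ then (1:k) else 0) =
      coeff ρ f + ((if s₁ ≤ ρ then coeff (ρ - s₁) g * 1 else 0)
        + (if s₂ ≤ ρ then coeff (ρ - s₂) g * 1 else 0)) := by
    intro ρ
    have h := congrArg (coeff ρ) heq
    rw [coeff_monomial, mul_add, coeff_add, coeff_add, coeff_mul_monomial',
      coeff_mul_monomial'] at h
    exact h
  let G : Finset (Fin n →₀ ℕ) := g.support.filter (fun σ => monomial (σ + s₁) (1:k) ∉ M)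
  have hGmem : ∀ σ, σ ∈ G ↔ (coeff σ g ≠ 0 ∧ monomial (σ + s₁) (1:k) ∉ M) := by
    intro σ; simp [G, Finset.mem_filter, mem_support_iff]
  have hGne : G.Nonempty := by
    have h1 := E τ
    rw [if_pos rfl, hcf τ hτ, zero_add] at h1
    have hor : (if s₁ ≤ τ then coeff (τ - s₁) g * 1 else 0) ≠ 0 ∨
        (if s₂ ≤ τ then coeff (τ - s₂) g * 1 else 0) ≠ 0 := by
      by_contra hcon
      push_neg at hcon
      rw [hcon.1, hcon.2, add_zero] at h1
      exact one_ne_zero h1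
    rcases hor with h | h
    · split_ifs at h with hle
      · refine ⟨τ - s₁, (hGmem _).mpr ⟨by simpa using h, ?_⟩⟩
        rw [tsub_add_cancel_of_le hle]; exact hτ
      · exact absurd rfl h
    · split_ifs at h with hle
      · refine ⟨τ - s₂, (hGmem _).mpr ⟨by simpa using h, ?_⟩⟩
        intro hm
        exact hτ (by rw [← tsub_add_cancel_of_le hle]; exact (hexp _).mp hm)
      · exact absurd rfl h
  have hkey : ∀ a b : Fin n →₀ ℕ, toLex a ≤ toLex b → toLex (a + s₁) < toLex (b + s₂) := by
    intro a b hab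
    rw [toLex_add, toLex_add]
    exact add_lt_add_of_le_of_lt hab hlt
  obtain ⟨σm, hσmG, hmax⟩ := G.exists_max_image (fun σ => toLex σ) hGne
  obtain ⟨hσmc, hσm1⟩ := (hGmem σm).mp hσmG
  have hσm2 : monomial (σm + s₂) (1:k) ∉ M := fun h => hσm1 ((hexp σm).mpr h)
  have hgu₁ : (if s₁ ≤ σm + s₂ then coeff (σm + s₂ - s₁) g * 1 else 0) = 0 := by
    split_ifs with hle
    · rw [mul_one]
      by_contra hc
      have hadd : (σm + s₂ - s₁) + s₁ = σm + s₂ := tsub_add_cancel_of_le hle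
      have hmem : (σm + s₂ - s₁) ∈ G :=
        (hGmem _).mpr ⟨hc, by rw [hadd]; exact hσm2⟩
      have hlex := hkey _ _ (hmax _ hmem)
      rw [hadd] at hlex
      exact lt_irrefl _ hlex
    · rfl
  have hEρ := E (σm + s₂)
  rw [hcf _ hσm2, zero_add, hgu₁, zero_add, if_pos (self_le_add_left s₂ σm),
    add_tsub_cancel_right, mul_one] at hEρ
  have hτeq : τ = σm + s₂ := by
    by_contra hne
    rw [if_neg hne] at hEρ
    exact hσmc hEρ.symm
  obtain ⟨σ0, hσ0G, hmin⟩ := G.exists_min_image (fun σ => toLex σ) hGne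
  obtain ⟨hσ0c, hσ01⟩ := (hGmem σ0).mp hσ0G
  have hρ₂ : τ ≠ σ0 + s₁ := by
    rw [hτeq]
    intro h
    have h2 := hkey σ0 σm (hmax σ0 hσ0G)
    rw [← h] at h2
    exact lt_irrefl _ h2
  have hE2 := E (σ0 + s₁)
  rw [if_neg hρ₂, hcf _ hσ01, zero_add, if_pos (self_le_add_left s₁ σ0),
    add_tsub_cancel_right, mul_one] at hE2
  have hne2 : (if s₂ ≤ σ0 + s₁ then coeff (σ0 + s₁ - s₂) g * 1 else 0) ≠ 0 := by
    intro h
    rw [h, add_zero] at hE2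
    exact hσ0c hE2.symm
  split_ifs at hne2 with hle
  · rw [mul_one] at hne2
    have hadd : (σ0 + s₁ - s₂) + s₂ = σ0 + s₁ := tsub_add_cancel_of_le hle
    have hmem : (σ0 + s₁ - s₂) ∈ G :=
      (hGmem _).mpr ⟨hne2, fun hm => hσ01 (hadd ▸ (hexp _).mp hm)⟩
    have h3 : toLex (σ0 + s₁) < toLex (σ0 + s₂) := hkey σ0 σ0 le_rfl
    have h4 : toLex (σ0 + s₂) ≤ toLex ((σ0 + s₁ - s₂) + s₂) := by
      rw [toLex_add, toLex_add]
      exact add_le_add_left (hmin _ hmem) _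
    rw [hadd] at h4
    exact lt_irrefl _ (lt_of_lt_of_le h3 h4)
  · exact hne2 rfl

private lemma colon_le_aux {k : Type*} [Field k] {n : ℕ}
    {M : Ideal (MvPolynomial (Fin n) k)} (hM : IsMonomialIdeal M) {s₁ s₂ : Fin n →₀ ℕ}
    (hmono : mono (M + Ideal.span {monomial s₁ (1:k) + monomial s₂ 1}) = M) :
    Submodule.colon M (Ideal.span {monomial s₁ (1:k)}) ≤
      Submodule.colon M (Ideal.span {monomial s₂ (1:k)}) := by
  intro x hx
  rw [mem_colon_span_singleton] at hx ⊢
  apply mem_of_support_monomials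
  intro ρ hρ
  rw [mem_support_iff, mul_comm, coeff_mul_monomial'] at hρ
  split_ifs at hρ with hle
  · rw [mul_one] at hρ
    have hadd : (ρ - s₂) + s₂ = ρ := tsub_add_cancel_of_le hle
    have h1 : monomial ((ρ - s₂) + s₁) (1:k) ∈ M := by
      refine (mem_monomialIdeal_iff hM).mp hx _ ?_
      rw [mem_support_iff, mul_comm, coeff_mul_monomial]
      simpa using hρ
    have h2 : monomial ((ρ - s₂) + s₂) (1:k) ∈
        M + Ideal.span {monomial s₁ (1:k) + monomial s₂ 1} := by
      have hrw : monomial ((ρ - s₂) + s₂) (1:k) =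
          monomial (ρ - s₂) 1 * (monomial s₁ 1 + monomial s₂ 1) -
            monomial ((ρ - s₂) + s₁) 1 := by
        rw [mul_add, monomial_mul, monomial_mul, mul_one]
        ring
      rw [hrw, Submodule.add_eq_sup]
      exact sub_mem
        (Submodule.mem_sup_right (Ideal.mul_mem_left _ _ (Ideal.subset_span rfl)))
        (Submodule.mem_sup_left h1)
    have h3 : monomial ((ρ - s₂) + s₂) (1:k) ∈ M := by
      rw [← hmono]
      exact Ideal.subset_span ⟨⟨_, rfl⟩, h2⟩
    rwa [hadd] at h3
  · exact absurd rfl hρ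

theorem mono_add_binomial_eq_iff {k : Type*} [Field k] {n : ℕ}
    (M : Ideal (MvPolynomial (Fin n) k)) (hM : IsMonomialIdeal M)
    (u₁ u₂ : MvPolynomial (Fin n) k) (h₁ : IsMonomial u₁) (h₂ : IsMonomial u₂)
    (hne : u₁ ≠ u₂) (hu₁ : u₁ ∉ M) (hu₂ : u₂ ∉ M) :
    mono (M + Ideal.span {u₁ + u₂}) = M ↔
      Submodule.colon M (Ideal.span {u₁}) = Submodule.colon M (Ideal.span {u₂}) := by
  obtain ⟨s₁, rfl⟩ := h₁
  obtain ⟨s₂, rfl⟩ := h₂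
  constructor
  · intro hmono
    refine le_antisymm (colon_le_aux hM hmono) (colon_le_aux hM ?_)
    rwa [add_comm (monomial s₂ (1:k))]
  · intro hcol
    have hexp : ∀ σ : Fin n →₀ ℕ,
        ((monomial (σ + s₁) (1:k) ∈ M) ↔ (monomial (σ + s₂) (1:k) ∈ M)) := by
      intro σ
      have e1 : monomial s₁ (1:k) * monomial σ 1 = monomial (σ + s₁) 1 := by
        rw [monomial_mul, one_mul, add_comm]
      have e2 : monomial s₂ (1:k) * monomial σ 1 = monomial (σ + s₂) 1 := by
        rw [monomial_mul, one_mul, add_comm]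
      rw [← e1, ← e2, ← mem_colon_span_singleton, ← mem_colon_span_singleton, hcol]
    refine le_antisymm ?_ ?_
    · rw [mono, Ideal.span_le]
      rintro x ⟨⟨τ, rfl⟩, hxJ⟩
      by_contra hτ
      rw [Submodule.add_eq_sup, Submodule.mem_sup] at hxJ
      obtain ⟨f, hf, h, hh, hsum⟩ := hxJ
      obtain ⟨g, rfl⟩ := Ideal.mem_span_singleton'.mp hh
      have heq : (monomial τ (1:k)) = f + g * (monomial s₁ 1 + monomial s₂ 1) := hsum.symm
      have hs₁₂ : s₁ ≠ s₂ := by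
        rintro rfl
        exact hne rfl
      rcases lt_trichotomy (toLex s₁) (toLex s₂) with hlt | heqq | hgt
      · exact descent hM hlt hexp hτ hf heq
      · exact hs₁₂ (toLex.injective heqq)
      · refine descent (g := g) hM hgt (fun σ => (hexp σ).symm) hτ hf ?_
        rwa [add_comm (monomial s₁ (1:k))] at heq
    · conv_lhs => rw [← hM]
      apply Ideal.span_mono
      rintro x ⟨hmon, hxM⟩
      exact ⟨hmon, by
        rw [Submodule.add_eq_sup]
        exact Submodule.mem_sup_left hxM⟩
end

section
/- Let b ∈ ℕⁿ and M = (x₁^{b₁}, …, xₙ^{bₙ}). Then there do not exist distinct monomials u₁ ≠ u₂ with u₁, u₂ ∉ M and M : u₁ = M : u₂. Consequently, if I is a graded Artinian ideal with mono(I) Gorenstein (equivalently of the form (x₁^{b₁},…,xₙ^{bₙ})), then I = mono(I) = (x₁^{b₁},…,xₙ^{bₙ}). -/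
open MvPolynomial

section Aux

variable {k : Type*} [Field k] {n : ℕ}

lemma mem_span_pows_iff (b : Fin n → ℕ) (f : MvPolynomial (Fin n) k) :
    f ∈ Ideal.span (Set.range fun i : Fin n => (X i : MvPolynomial (Fin n) k) ^ b i) ↔
      ∀ m ∈ f.support, ∃ i, b i ≤ m i := by
  have h : (Set.range fun i : Fin n => (X i : MvPolynomial (Fin n) k) ^ b i)
      = (fun s => monomial s (1:k)) '' (Set.range fun i => Finsupp.single i (b i)) := by
    rw [← Set.range_comp]
    refine congrArg _ (funext fun i => ?_)
    simp [Function.comp, X_pow_eq_monomial]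
  rw [h, mem_ideal_span_monomial_image]
  refine forall₂_congr fun m _ => ?_
  constructor
  · rintro ⟨si, ⟨i, rfl⟩, hle⟩
    exact ⟨i, Finsupp.single_le_iff.mp hle⟩
  · rintro ⟨i, hi⟩
    exact ⟨Finsupp.single i (b i), ⟨i, rfl⟩, Finsupp.single_le_iff.mpr hi⟩

lemma monomial_mem_span_pows_iff (b : Fin n → ℕ) (s : Fin n →₀ ℕ) :
    (monomial s (1:k)) ∈
        Ideal.span (Set.range fun i : Fin n => (X i : MvPolynomial (Fin n) k) ^ b i) ↔
      ∃ i, b i ≤ s i := by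
  classical
  rw [mem_span_pows_iff, support_monomial]
  simp

lemma aux_ne {α : Type*} (s : Finset α) (g : α → (Fin n →₀ ℕ)) (c : α → k) (m' : Fin n →₀ ℕ)
    (h : coeff m' (∑ a ∈ s, monomial (g a) (c a)) ≠ 0) : ∃ a ∈ s, g a = m' := by
  classical
  by_contra hc
  push_neg at hc
  apply h
  rw [coeff_sum]
  refine Finset.sum_eq_zero fun a ha => ?_
  rw [coeff_monomial, if_neg (hc a ha)]

lemma aux_eq {α : Type*} [DecidableEq α] (s : Finset α) (g : α → (Fin n →₀ ℕ)) (c : α → k)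
    (a₀ : α) (h : a₀ ∈ s) (hinj : ∀ a ∈ s, g a = g a₀ → a = a₀) :
    coeff (g a₀) (∑ a ∈ s, monomial (g a) (c a)) = c a₀ := by
  classical
  rw [coeff_sum, Finset.sum_eq_single a₀]
  · rw [coeff_monomial, if_pos rfl]
  · intro a ha hne
    rw [coeff_monomial, if_neg fun he => hne (hinj a ha he)]
  · intro h'
    exact absurd h h'

lemma colon_key (b : Fin n → ℕ) {s₁ s₂ : Fin n →₀ ℕ}
    (h1 : ∀ i, s₁ i < b i) (h2 : ∀ i, s₂ i < b i) {j : Fin n} (hj : s₁ j < s₂ j)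
    (hcol : Submodule.colon
        (Ideal.span (Set.range fun i : Fin n => (X i : MvPolynomial (Fin n) k) ^ b i))
        (Ideal.span {monomial s₂ (1:k)}) ≤
      Submodule.colon
        (Ideal.span (Set.range fun i : Fin n => (X i : MvPolynomial (Fin n) k) ^ b i))
        (Ideal.span {monomial s₁ (1:k)})) : False := by
  classical
  set M := Ideal.span (Set.range fun i : Fin n => (X i : MvPolynomial (Fin n) k) ^ b i) with hM
  set d : Fin n →₀ ℕ := Finsupp.single j (b j - s₂ j) with hd
  have hv2 : (monomial d (1:k)) ∈ Submodule.colon M (Ideal.span {monomial s₂ (1:k)}) := by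
    rw [Submodule.mem_colon]
    intro p hp
    rw [SetLike.mem_coe, Ideal.mem_span_singleton] at hp
    obtain ⟨a, rfl⟩ := hp
    have hmem : (monomial (d + s₂) (1:k)) ∈ M := by
      rw [hM, monomial_mem_span_pows_iff]
      refine ⟨j, ?_⟩
      have := h2 j
      simp only [hd, Finsupp.add_apply, Finsupp.single_eq_same]
      omega
    have : monomial d (1:k) • (monomial s₂ (1:k) * a)
        = (monomial (d + s₂) (1:k)) * a := by
      rw [smul_eq_mul, ← mul_assoc, monomial_mul, one_mul]
    rw [this]
    exact Ideal.mul_mem_right a _ hmem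
  have hv1 := Submodule.mem_colon.mp (hcol hv2) (monomial s₁ 1)
    (Ideal.mem_span_singleton_self _)
  rw [smul_eq_mul, monomial_mul, one_mul, hM, monomial_mem_span_pows_iff] at hv1
  obtain ⟨i, hi⟩ := hv1
  rcases eq_or_ne i j with rfl | hne
  · have := h2 i
    simp only [hd, Finsupp.add_apply, Finsupp.single_eq_same] at hi
    omega
  · have := h1 i
    simp only [hd, Finsupp.add_apply, Finsupp.single_apply, if_neg (Ne.symm hne)] at hi
    omega

end Aux

theorem mono_gorenstein {k : Type*} [Field k] {n : ℕ} (b : Fin n → ℕ)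
    (M : Ideal (MvPolynomial (Fin n) k))
    (hMdef : M = Ideal.span (Set.range fun i : Fin n => MvPolynomial.X i ^ b i)) :
    (¬ ∃ u₁ u₂ : MvPolynomial (Fin n) k, IsMonomial u₁ ∧ IsMonomial u₂ ∧ u₁ ≠ u₂ ∧
        u₁ ∉ M ∧ u₂ ∉ M ∧
        Submodule.colon M (Ideal.span {u₁}) = Submodule.colon M (Ideal.span {u₂})) ∧
      (∀ I : Ideal (MvPolynomial (Fin n) k), IsHomogeneousIdeal I →
        (∃ s : ℕ, (maxIdeal k n) ^ s ≤ I) → mono I = M → I = M) := by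
  classical
  subst hMdef
  set M := Ideal.span (Set.range fun i : Fin n => (X i : MvPolynomial (Fin n) k) ^ b i) with hM
  constructor
  · rintro ⟨u₁, u₂, ⟨s₁, rfl⟩, ⟨s₂, rfl⟩, hne, h1, h2, hcol⟩
    have hs : s₁ ≠ s₂ := fun h => hne (by rw [h])
    have hlt1 : ∀ i, s₁ i < b i := by
      intro i
      by_contra h
      exact h1 ((monomial_mem_span_pows_iff b s₁).mpr ⟨i, not_lt.mp h⟩)
    have hlt2 : ∀ i, s₂ i < b i := by
      intro i
      by_contra h
      exact h2 ((monomial_mem_span_pows_iff b s₂).mpr ⟨i, not_lt.mp h⟩)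
    obtain ⟨j, hj⟩ := Finsupp.ne_iff.mp hs
    rcases lt_or_gt_of_ne hj with h | h
    · exact colon_key b hlt1 hlt2 h hcol.ge
    · exact colon_key b hlt2 hlt1 h hcol.le
  · intro I _ _ hmono
    have hMI : M ≤ I := by
      rw [← hmono]
      exact Ideal.span_le.mpr fun f hf => hf.2
    have main : ∀ c : ℕ, ∀ f : MvPolynomial (Fin n) k, f ∈ I →
        (∀ m ∈ f.support, ∀ i, m i < b i) → f.support.card = c → f = 0 := by
      intro c
      induction c using Nat.strong_induction_on with
      | _ c ih =>
        intro f hfI hgood hcard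
        by_contra hf0
        have hnon : f.support.Nonempty :=
          Finset.nonempty_iff_ne_empty.mpr fun h => hf0 (support_eq_empty.mp h)
        rcases eq_or_lt_of_le (Nat.succ_le_of_lt hnon.card_pos) with h1 | h2
        · -- f is a single monomial
          obtain ⟨m₁, hm1⟩ := Finset.card_eq_one.mp h1.symm
          have hmm : m₁ ∈ f.support := hm1 ▸ Finset.mem_singleton_self m₁
          have hcoeff : coeff m₁ f ≠ 0 := mem_support_iff.mp hmm
          have hf : f = monomial m₁ (coeff m₁ f) := by
            conv_lhs => rw [f.as_sum]
            rw [hm1, Finset.sum_singleton]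
          have hmon : (monomial m₁ (1:k)) ∈ I := by
            have : C (coeff m₁ f)⁻¹ * f = monomial m₁ (1:k) := by
              nth_rewrite 2 [hf]
              rw [C_mul_monomial, inv_mul_cancel₀ hcoeff]
            rw [← this]
            exact Ideal.mul_mem_left _ _ hfI
          have hMmem : (monomial m₁ (1:k)) ∈ M := by
            rw [← hmono]
            exact Ideal.subset_span ⟨⟨m₁, rfl⟩, hmon⟩
          obtain ⟨i, hi⟩ := (monomial_mem_span_pows_iff b m₁).mp hMmem
          exact absurd hi (not_le.mpr (hgood m₁ hmm i))
        · -- f has at least two monomials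
          obtain ⟨ma, hma, mb, hmb, hab⟩ := Finset.one_lt_card.mp h2
          obtain ⟨j, hjne⟩ := Finsupp.ne_iff.mp hab
          obtain ⟨m₁, hm₁, m₂, hm₂, hj⟩ :
              ∃ m₁ ∈ f.support, ∃ m₂ ∈ f.support, m₁ j < m₂ j := by
            rcases lt_or_gt_of_ne hjne with h | h
            · exact ⟨ma, hma, mb, hmb, h⟩
            · exact ⟨mb, hmb, ma, hma, h⟩
          set d : Fin n →₀ ℕ := Finsupp.single j (b j - m₂ j) with hd
          have hdapp : ∀ m : Fin n →₀ ℕ, ∀ i, (d + m) i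
              = (if i = j then b j - m₂ j else 0) + m i := by
            intro m i
            rcases eq_or_ne i j with rfl | h
            · simp [hd, Finsupp.add_apply]
            · rw [if_neg h, Finsupp.add_apply, hd, Finsupp.single_apply,
                if_neg (Ne.symm h)]
          set T := f.support.filter (fun m => ∀ i, (d + m) i < b i) with hT
          set g' := ∑ m ∈ T, monomial (d + m) (coeff m f) with hg'
          set gB := ∑ m ∈ f.support.filter (fun m => ¬ ∀ i, (d + m) i < b i),
            monomial (d + m) (coeff m f) with hgB
          have hsum : monomial d 1 * f = g' + gB := by
            conv_lhs => rw [f.as_sum, Finset.mul_sum]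
            simp_rw [monomial_mul, one_mul]
            exact (Finset.sum_filter_add_sum_filter_not _ _ _).symm
          have hgBM : gB ∈ M := by
            rw [hM, mem_span_pows_iff]
            intro m' hm'
            obtain ⟨m, hm, rfl⟩ := aux_ne _ _ _ m' (mem_support_iff.mp hm')
            have := (Finset.mem_filter.mp hm).2
            push_neg at this
            obtain ⟨i, hi⟩ := this
            exact ⟨i, hi⟩
          have hg'I : g' ∈ I := by
            have : g' = monomial d 1 * f - gB := by rw [hsum]; ring
            rw [this]
            exact Ideal.sub_mem _ (Ideal.mul_mem_left _ _ hfI) (hMI hgBM)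
          have hm₂b : m₂ j < b j := hgood m₂ hm₂ j
          have hm₁T : m₁ ∈ T := by
            refine Finset.mem_filter.mpr ⟨hm₁, fun i => ?_⟩
            rw [hdapp]
            rcases eq_or_ne i j with rfl | hne
            · rw [if_pos rfl]
              have := hgood m₁ hm₁ i
              omega
            · rw [if_neg hne]
              have := hgood m₁ hm₁ i
              omega
          have hcoe : coeff (d + m₁) g' = coeff m₁ f :=
            aux_eq T (fun m => d + m) (fun m => coeff m f) m₁ hm₁T
              (fun a _ h => add_left_cancel h)
          have hg'ne : g' ≠ 0 := by
            intro h
            rw [h, coeff_zero] at hcoe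
            exact mem_support_iff.mp hm₁ hcoe.symm
          have hg'good : ∀ m' ∈ g'.support, ∀ i, m' i < b i := by
            intro m' hm' i
            obtain ⟨m, hm, rfl⟩ := aux_ne _ _ _ m' (mem_support_iff.mp hm')
            exact (Finset.mem_filter.mp hm).2 i
          have hm₂T : m₂ ∉ T := by
            intro hmem
            have := (Finset.mem_filter.mp hmem).2 j
            rw [hdapp, if_pos rfl] at this
            omega
          have hcard' : g'.support.card < c := by
            have hsub : g'.support ⊆ T.image (fun m => d + m) := by
              intro m' hm'
              obtain ⟨m, hm, rfl⟩ := aux_ne _ _ _ m' (mem_support_iff.mp hm')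
              exact Finset.mem_image.mpr ⟨m, hm, rfl⟩
            calc g'.support.card ≤ (T.image (fun m => d + m)).card := Finset.card_le_card hsub
              _ ≤ T.card := Finset.card_image_le
              _ < f.support.card := Finset.card_lt_card
                  ((Finset.ssubset_iff_of_subset (Finset.filter_subset _ _)).mpr
                    ⟨m₂, hm₂, hm₂T⟩)
              _ = c := hcard
          exact hg'ne (ih g'.support.card hcard' g' hg'I hg'good rfl)
    refine le_antisymm (fun g hg => ?_) hMI
    set f := ∑ m ∈ g.support.filter (fun m => ∀ i, m i < b i), monomial m (coeff m g) with hf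
    set fB := ∑ m ∈ g.support.filter (fun m => ¬ ∀ i, m i < b i),
      monomial m (coeff m g) with hfB
    have hsplit : g = f + fB := by
      conv_lhs => rw [g.as_sum]
      exact (Finset.sum_filter_add_sum_filter_not _ _ _).symm
    have hfBM : fB ∈ M := by
      rw [hM, mem_span_pows_iff]
      intro m' hm'
      obtain ⟨m, hm, rfl⟩ := aux_ne _ _ _ m' (mem_support_iff.mp hm')
      have := (Finset.mem_filter.mp hm).2
      push_neg at this
      obtain ⟨i, hi⟩ := this
      exact ⟨i, hi⟩
    have hfI : f ∈ I := by
      have : f = g - fB := by rw [hsplit]; ring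
      rw [this]
      exact Ideal.sub_mem _ hg (hMI hfBM)
    have hfgood : ∀ m' ∈ f.support, ∀ i, m' i < b i := by
      intro m' hm' i
      obtain ⟨m, hm, rfl⟩ := aux_ne _ _ _ m' (mem_support_iff.mp hm')
      exact (Finset.mem_filter.mp hm).2 i
    have hf0 : f = 0 := main f.support.card f hfI hfgood rfl
    rw [hsplit, hf0, zero_add]
    exact hfBM
end

section
/- Let M be an Artinian monomial ideal whose socle has k-dimension at least 2, witnessed by two distinct monomials u₁ ≠ u₂ in (M : m) \ M. Then I := M + (u₁ + u₂) is a non-monomial ideal with mono(I) = M. -/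
open MvPolynomial

/-- Membership in a monomial ideal is detected on supports. -/
lemma IsMonomialIdeal.mem_iff {k : Type*} [Field k] {n : ℕ}
    {M : Ideal (MvPolynomial (Fin n) k)} (hM : IsMonomialIdeal M)
    (p : MvPolynomial (Fin n) k) :
    p ∈ M ↔ ∀ t ∈ p.support, (MvPolynomial.monomial t (1 : k)) ∈ M := by
  have hset : {f : MvPolynomial (Fin n) k | IsMonomial f ∧ f ∈ M} =
      (fun s => MvPolynomial.monomial s (1 : k)) '' {s | (MvPolynomial.monomial s (1 : k)) ∈ M} := by
    ext f
    constructor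
    · rintro ⟨⟨s, rfl⟩, hf⟩
      exact ⟨s, hf, rfl⟩
    · rintro ⟨s, hs, rfl⟩
      exact ⟨⟨s, rfl⟩, hs⟩
  have hMeq : M = Ideal.span ((fun s => MvPolynomial.monomial s (1 : k)) ''
      {s | (MvPolynomial.monomial s (1 : k)) ∈ M}) := by
    conv_lhs => rw [← hM]
    rw [mono, hset]
  constructor
  · intro hp t ht
    rw [hMeq] at hp
    obtain ⟨si, hsi, hle⟩ := MvPolynomial.mem_ideal_span_monomial_image.mp hp t ht
    have : (MvPolynomial.monomial (t - si) (1 : k)) * MvPolynomial.monomial si 1 =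
        MvPolynomial.monomial t 1 := by
      rw [MvPolynomial.monomial_mul, one_mul, tsub_add_cancel_of_le hle]
    rw [← this]
    exact Ideal.mul_mem_left _ _ hsi
  · intro hp
    rw [hMeq]
    exact MvPolynomial.mem_ideal_span_monomial_image.mpr fun t ht => ⟨t, hp t ht, le_rfl⟩

lemma mem_maxIdeal_of_constantCoeff_eq_zero {k : Type*} [Field k] {n : ℕ}
    {g : MvPolynomial (Fin n) k} (hg : MvPolynomial.constantCoeff g = 0) :
    g ∈ maxIdeal k n := by
  rw [maxIdeal, ← Set.image_univ]
  refine MvPolynomial.mem_ideal_span_X_image.mpr fun m hm => ?_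
  rcases Finsupp.ne_iff.mp (show m ≠ 0 by
    rintro rfl
    exact MvPolynomial.mem_support_iff.mp hm hg) with ⟨i, hi⟩
  exact ⟨i, trivial, by simpa using hi⟩

theorem socle_binomial_mono {k : Type*} [Field k] {n : ℕ}
    (M : Ideal (MvPolynomial (Fin n) k)) (hM : IsMonomialIdeal M)
    (hart : ∃ s : ℕ, (maxIdeal k n) ^ s ≤ M)
    (u₁ u₂ : MvPolynomial (Fin n) k) (h₁ : IsMonomial u₁) (h₂ : IsMonomial u₂)
    (hne : u₁ ≠ u₂) (hu₁ : u₁ ∉ M) (hu₂ : u₂ ∉ M)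
    (hs₁ : u₁ ∈ Submodule.colon M (maxIdeal k n))
    (hs₂ : u₂ ∈ Submodule.colon M (maxIdeal k n)) :
    mono (M + Ideal.span {u₁ + u₂}) = M ∧ ¬ IsMonomialIdeal (M + Ideal.span {u₁ + u₂}) := by
  obtain ⟨s₁, rfl⟩ := h₁
  obtain ⟨s₂, rfl⟩ := h₂
  have hs : s₁ ≠ s₂ := fun h => hne (by rw [h])
  have hmem := hM.mem_iff
  have hmain : mono (M + Ideal.span {(monomial s₁ (1:k)) + monomial s₂ 1}) = M := by
    apply le_antisymm
    · rw [mono, Ideal.span_le]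
      rintro f ⟨⟨t, rfl⟩, hf⟩
      -- decompose f = y + g * (u₁ + u₂)
      rw [Submodule.add_eq_sup, Submodule.mem_sup] at hf
      obtain ⟨y, hy, z, hz, hyz⟩ := hf
      obtain ⟨g, rfl⟩ := Ideal.mem_span_singleton'.mp hz
      set c := MvPolynomial.constantCoeff g with hc
      have hg' : g - C c ∈ maxIdeal k n :=
        mem_maxIdeal_of_constantCoeff_eq_zero (by simp [hc])
      have hm1 : (monomial s₁ (1:k)) * (g - C c) ∈ M := Submodule.mem_colon.mp hs₁ _ hg'
      have hm2 : (monomial s₂ (1:k)) * (g - C c) ∈ M := Submodule.mem_colon.mp hs₂ _ hg'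
      have hp : (monomial t (1:k)) - C c * monomial s₁ 1 - C c * monomial s₂ 1 ∈ M := by
        have : (monomial t (1:k)) - C c * monomial s₁ 1 - C c * monomial s₂ 1 =
            y + ((monomial s₁ (1:k)) * (g - C c) + (monomial s₂ (1:k)) * (g - C c)) := by
          rw [← hyz]; ring
        rw [this]
        exact M.add_mem hy (M.add_mem hm1 hm2)
      by_cases hc0 : c = 0
      · simpa [hc0] using hp
      · exfalso
        by_cases hts : t = s₁
        · -- then t ≠ s₂, coefficient at s₂ is -c ≠ 0
          have hts2 : t ≠ s₂ := hts ▸ hs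
          have hcoeff : MvPolynomial.coeff s₂
              ((monomial t (1:k)) - C c * monomial s₁ 1 - C c * monomial s₂ 1) = -c := by
            simp [MvPolynomial.coeff_monomial, hts2, hs]
          have : (monomial s₂ (1:k)) ∈ M := by
            refine (hmem _).mp hp s₂ ?_
            rw [MvPolynomial.mem_support_iff, hcoeff]
            simpa using hc0
          exact hu₂ this
        · have hcoeff : MvPolynomial.coeff s₁
              ((monomial t (1:k)) - C c * monomial s₁ 1 - C c * monomial s₂ 1) =
              MvPolynomial.coeff s₁ (monomial t (1:k)) - c := by
            simp [MvPolynomial.coeff_monomial, Ne.symm hs]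
          have : (monomial s₁ (1:k)) ∈ M := by
            refine (hmem _).mp hp s₁ ?_
            rw [MvPolynomial.mem_support_iff, hcoeff]
            simp [MvPolynomial.coeff_monomial, hts, hc0]
          exact hu₁ this
    · -- M ≤ mono I
      intro p hp
      have : p ∈ mono M := by rw [hM]; exact hp
      rw [mono] at this ⊢
      refine Ideal.span_mono ?_ this
      rintro f ⟨hf1, hf2⟩
      exact ⟨hf1, Submodule.mem_sup_left hf2⟩
  refine ⟨hmain, fun hmono => ?_⟩
  have hIeq : M + Ideal.span {(monomial s₁ (1:k)) + monomial s₂ 1} = M := by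
    have h' : mono (M + Ideal.span {(monomial s₁ (1:k)) + monomial s₂ 1}) =
        M + Ideal.span {(monomial s₁ (1:k)) + monomial s₂ 1} := hmono
    rw [h'] at hmain; exact hmain
  have hsum : (monomial s₁ (1:k)) + monomial s₂ 1 ∈ M := by
    rw [← hIeq]
    exact Submodule.mem_sup_right (Ideal.subset_span rfl)
  have : (monomial s₁ (1:k)) ∈ M := by
    refine (hmem _).mp hsum s₁ ?_
    rw [MvPolynomial.mem_support_iff]
    simp [MvPolynomial.coeff_monomial, Ne.symm hs]
  exact hu₁ this
end

section
/- Let I ⊆ R be an ideal and M ⊆ I an Artinian monomial ideal. If I contains no socle monomial of M (i.e. no monomial in (M : m) \ M lies in I), then mono(I) = M. -/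
open MvPolynomial

lemma deg_add_single {n : ℕ} (a : Fin n →₀ ℕ) (i : Fin n) :
    ((a + Finsupp.single i 1).sum fun _ e => e) = (a.sum fun _ e => e) + 1 := by
  rw [Finsupp.sum_add_index' (fun _ => rfl) (fun _ _ _ => rfl),
    Finsupp.sum_single_index rfl]

lemma monomial_mem_pow_maxIdeal {k : Type*} [Field k] {n : ℕ} (s : ℕ) (a : Fin n →₀ ℕ)
    (h : s ≤ a.sum fun _ e => e) :
    (monomial a 1 : MvPolynomial (Fin n) k) ∈ (maxIdeal k n) ^ s := by
  induction s generalizing a with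
  | zero => simp
  | succ s ih =>
    have hne : a ≠ 0 := by
      rintro rfl; simp at h
    obtain ⟨i, hi⟩ := Finsupp.ne_iff.mp hne
    simp only [Finsupp.coe_zero, Pi.zero_apply] at hi
    set b := a - Finsupp.single i 1 with hb
    have hab : a = b + Finsupp.single i 1 := by
      ext j
      simp only [hb, Finsupp.add_apply, Finsupp.tsub_apply, Finsupp.single_apply]
      by_cases hji : i = j
      · subst hji; simp; omega
      · simp [hji]
    have hdeg : s ≤ b.sum fun _ e => e := by
      have := deg_add_single b i
      rw [← hab] at this
      omega
    have key : (monomial a 1 : MvPolynomial (Fin n) k)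
        = monomial b 1 * X i := by
      rw [hab, X, monomial_mul, one_mul]
    rw [key, pow_succ]
    exact Ideal.mul_mem_mul (ih b hdeg) (Ideal.subset_span ⟨i, rfl⟩)

theorem mono_eq_of_no_socle_monomial {k : Type*} [Field k] {n : ℕ}
    (I M : Ideal (MvPolynomial (Fin n) k)) (hM : IsMonomialIdeal M)
    (hart : ∃ s : ℕ, (maxIdeal k n) ^ s ≤ M) (hMI : M ≤ I)
    (hsoc : ∀ u : MvPolynomial (Fin n) k, IsMonomial u →
      u ∈ Submodule.colon M (maxIdeal k n) → u ∉ M → u ∉ I) :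
    mono I = M := by
  obtain ⟨s, hs⟩ := hart
  have key : ∀ d : ℕ, ∀ a : Fin n →₀ ℕ, s - (a.sum fun _ e => e) ≤ d →
      (monomial a 1 : MvPolynomial (Fin n) k) ∈ I → (monomial a 1 : MvPolynomial (Fin n) k) ∈ M := by
    intro d
    induction d with
    | zero =>
      intro a ha hI
      exact hs (monomial_mem_pow_maxIdeal s a (by omega))
    | succ d ih =>
      intro a ha hI
      by_cases hdeg : s ≤ a.sum fun _ e => e
      · exact hs (monomial_mem_pow_maxIdeal s a hdeg)
      · by_cases hmem : (monomial a 1 : MvPolynomial (Fin n) k) ∈ M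
        · exact hmem
        · exfalso
          refine hsoc (monomial a 1) ⟨a, rfl⟩ ?_ hmem hI
          rw [Submodule.mem_colon]
          intro f hf
          have hX : ∀ i : Fin n, X i * (monomial a 1 : MvPolynomial (Fin n) k) ∈ M := by
            intro i
            have heq : X i * (monomial a 1 : MvPolynomial (Fin n) k)
                = monomial (a + Finsupp.single i 1) 1 := by
              rw [X, monomial_mul, one_mul, add_comm]
            rw [heq]
            refine ih (a + Finsupp.single i 1) ?_ ?_
            · rw [deg_add_single]; omega
            · rw [← heq]; exact Ideal.mul_mem_left I _ hI
          refine Submodule.span_induction ?_ ?_ ?_ ?_ hf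
          · rintro x ⟨i, rfl⟩
            rw [smul_eq_mul, mul_comm]
            exact hX i
          · simp
          · intro f g _ _ hfm hgm
            rw [smul_add]; exact M.add_mem hfm hgm
          · intro c f _ hfm
            rw [smul_comm]
            exact Submodule.smul_mem M c hfm
  apply le_antisymm
  · rw [mono, Ideal.span_le]
    rintro f ⟨⟨a, rfl⟩, hfI⟩
    exact key s a (Nat.sub_le _ _) hfI
  · conv_lhs => rw [← hM]
    exact Ideal.span_mono fun f ⟨h1, h2⟩ => ⟨h1, hMI h2⟩
end
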